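/- arXiv:1809.07298 — 6 statements merged into one kernel-verified Lean document; each statement's English description precedes it below -/
import Mathlib

section
/- Let L be a lattice in R^{n+1} invariant under the reflection σ(x,y) = (x,−y). If (p,q) ∈ L with 0 < q ≤ y_0, then p is a period of the projection P(L ∩ B), where P(x,y)=x and B = {(x,y) : 0 ≤ y ≤ y_0}. -/
/-- A lattice in a real vector space: the ℤ-span of `m` linearly independent vectors. -/
def IsLatticeIn {V : Type*} [AddCommGroup V] [Module ℝ V] (m : ℕ) (L : Set V) : Prop :=
  ∃ b : Fin m → V, LinearIndependent ℝ b ∧ L = (Submodule.span ℤ (Set.range b) : Set V)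

/-- The projection `P(L ∩ B_{y₀})` of the part of `L` in the band `0 ≤ y ≤ y₀`. -/
def projBand (n : ℕ) (L : Set ((Fin n → ℝ) × ℝ)) (y₀ : ℝ) : Set (Fin n → ℝ) :=
  {x | ∃ y : ℝ, 0 ≤ y ∧ y ≤ y₀ ∧ ((x, y) : _ × ℝ) ∈ L}

/-- The reflection `σ(x,y) = (x,-y)`. -/
def sigmaRefl (n : ℕ) : ((Fin n → ℝ) × ℝ) → ((Fin n → ℝ) × ℝ) := fun v => (v.1, -v.2)

theorem period_of_sigma_invariant (n : ℕ)
    (L : Set ((Fin n → ℝ) × ℝ)) (hL : IsLatticeIn (n + 1) L)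
    (hσ : sigmaRefl n '' L = L)
    (y₀ : ℝ) (hy₀ : 0 < y₀)
    (p : Fin n → ℝ) (q : ℝ) (hq0 : 0 < q) (hqy : q ≤ y₀)
    (hpq : ((p, q) : _ × ℝ) ∈ L) :
    ∀ x ∈ projBand n L y₀, x + p ∈ projBand n L y₀ := by
  -- σ(p,q) = (p, -q) ∈ L
  have hpq' : ((p, -q) : _ × ℝ) ∈ L := by
    rw [← hσ]
    exact ⟨(p, q), hpq, rfl⟩
  rintro x ⟨y, hy0, hyy, hxy⟩
  -- (x+p, y-q) ∈ L since L is closed under addition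
  have hadd : ((x + p, y - q) : _ × ℝ) ∈ L := by
    obtain ⟨b, -, hL'⟩ := hL
    rw [hL'] at hxy hpq' ⊢
    have := Submodule.add_mem _ hxy hpq'
    simpa [Prod.mk_add_mk, sub_eq_add_neg] using this
  by_cases h : q ≤ y
  · exact ⟨y - q, by linarith, by linarith, hadd⟩
  · refine ⟨q - y, by linarith, by linarith, ?_⟩
    rw [← hσ]
    exact ⟨(x + p, y - q), hadd, by simp [sigmaRefl]⟩
end

section
/- Let L be a lattice in R^{n+1} invariant under σ(x,y) = (x,−y). Then the restriction R_0(L) = {x ∈ R^n : (x,0) ∈ L} is a lattice in R^n, i.e., a Z-module generated by n linearly independent vectors. -/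
theorem restriction_is_lattice (n : ℕ)
    (L : Set ((Fin n → ℝ) × ℝ)) (hL : IsLatticeIn (n + 1) L)
    (hσ : sigmaRefl n '' L = L) :
    IsLatticeIn n {x : Fin n → ℝ | ((x, (0 : ℝ)) : _ × ℝ) ∈ L} := by
  classical
  obtain ⟨b, hb, hLeq⟩ := hL
  -- `b` is in fact a basis of `V` since `finrank V = n+1`
  have hcard : Fintype.card (Fin (n + 1)) = Module.finrank ℝ ((Fin n → ℝ) × ℝ) := by
    simp [Module.finrank_prod]
  let B : Module.Basis (Fin (n + 1)) ℝ ((Fin n → ℝ) × ℝ) := basisOfLinearIndependentOfCardEqFinrank hb hcard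
  have hBcoe : ⇑B = b := coe_basisOfLinearIndependentOfCardEqFinrank hb hcard
  -- the lattice as a ℤ-submodule
  set L' : Submodule ℤ ((Fin n → ℝ) × ℝ) := Submodule.span ℤ (Set.range ⇑B) with hL'
  have hLset : L = (L' : Set ((Fin n → ℝ) × ℝ)) := by rw [hL', hBcoe, hLeq]
  -- the embedding x ↦ (x, 0)
  let f : (Fin n → ℝ) →ₗ[ℝ] ((Fin n → ℝ) × ℝ) := LinearMap.inl ℝ (Fin n → ℝ) ℝ
  have hfinj : Function.Injective f := LinearMap.inl_injective
  have hfcont : Continuous f := by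
    exact (continuous_id.prodMk continuous_const : Continuous fun x : Fin n → ℝ => (x, (0:ℝ)))
  set M : Submodule ℤ (Fin n → ℝ) := ZLattice.comap ℝ L' f with hM
  have hMset : (M : Set (Fin n → ℝ)) = {x : Fin n → ℝ | ((x, (0 : ℝ)) : _ × ℝ) ∈ L} := by
    rw [hM, ZLattice.coe_comap, hLset]
    rfl
  haveI : DiscreteTopology M := ZLattice.comap_discreteTopology ℝ L' hfcont hfinj
  -- σ-invariance gives that 2 • (b j).1 ∈ M
  have hmem : ∀ j, (2 : ℝ) • (b j).1 ∈ Submodule.span ℝ (M : Set (Fin n → ℝ)) := by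
    intro j
    apply Submodule.subset_span
    have hbL : b j ∈ L := by
      rw [hLeq]
      exact Submodule.subset_span (Set.mem_range_self j)
    have hσbL : sigmaRefl n (b j) ∈ L := by
      rw [← hσ]; exact Set.mem_image_of_mem _ hbL
    have hsum : b j + sigmaRefl n (b j) ∈ L' := by
      rw [hLset] at hbL hσbL
      exact L'.add_mem hbL hσbL
    have heq : b j + sigmaRefl n (b j) = (((2 : ℝ) • (b j).1, (0 : ℝ)) : (Fin n → ℝ) × ℝ) := by
      apply Prod.ext <;> simp [sigmaRefl, two_smul]
    rw [heq] at hsum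
    show ((2 : ℝ) • (b j).1, (0 : ℝ)) ∈ L'
    exact hsum
  -- hence M spans ℝ^n over ℝ
  have hspan : Submodule.span ℝ (M : Set (Fin n → ℝ)) = ⊤ := by
    rw [eq_top_iff]
    have h1 : Submodule.span ℝ (Set.range (Prod.fst ∘ b)) = ⊤ := by
      have h2 : Submodule.map (LinearMap.fst ℝ (Fin n → ℝ) ℝ) (Submodule.span ℝ (Set.range b)) =
          Submodule.span ℝ (Set.range (Prod.fst ∘ b)) := by
        rw [Submodule.map_span, ← Set.range_comp]
        rfl
      have h3 : Submodule.span ℝ (Set.range b) = ⊤ := by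
        rw [← hBcoe]; exact B.span_eq
      rw [h3, Submodule.map_top] at h2
      rw [← h2]
      exact LinearMap.range_eq_top.mpr (fun p => ⟨(p, 0), rfl⟩)
    rw [← h1, Submodule.span_le]
    rintro _ ⟨j, rfl⟩
    have : (Prod.fst ∘ b) j = (2⁻¹ : ℝ) • ((2 : ℝ) • (b j).1) := by
      rw [smul_smul]; norm_num
    rw [this]
    exact Submodule.smul_mem _ _ (hmem j)
  haveI : IsZLattice ℝ M := ⟨hspan⟩
  haveI : Module.Finite ℤ M := ZLattice.module_finite ℝ M
  haveI : Module.Free ℤ M := ZLattice.module_free ℝ M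
  have hrank : Module.finrank ℤ M = n := by
    rw [ZLattice.rank ℝ M]
    simp
  -- a ℤ-basis of M indexed by Fin n
  have hcard' : Fintype.card (Module.Free.ChooseBasisIndex ℤ M) = n := by
    rw [← Module.finrank_eq_card_chooseBasisIndex, hrank]
  let e : Module.Free.ChooseBasisIndex ℤ M ≃ Fin n := Fintype.equivFinOfCardEq hcard'
  let b₀ : Module.Basis (Fin n) ℤ M := (Module.Free.chooseBasis ℤ M).reindex e
  let c : Module.Basis (Fin n) ℝ (Fin n → ℝ) := b₀.ofZLatticeBasis ℝ M
  refine ⟨⇑c, c.linearIndependent, ?_⟩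
  rw [← hMset, ← b₀.ofZLatticeBasis_span ℝ]
end

section
/- Let L be a lattice in R^{n+1} with (p,0) ∉ L for a given p ∈ R^n, and suppose (0,b) ∈ L and (p,q) ∈ L with b > 0. Fix adapted generators {(0,b_0), (a_1,b_1), …, (a_n,b_n)} of L with m_* a_1 = p for some positive integer m_*. Then p is a period of P(L ∩ B_{y_0}) if and only if the following diophantine condition holds: for all integers m_1,…,m_n, if Σ m_i b_i ∈ [0,y_0] (mod b_0) then m_* b_1 + Σ m_i b_i ∈ [0,y_0] (mod b_0). -/
/-- `z ∈ [0, y₀] (mod b₀)`. -/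
def inBandMod (z y₀ b₀ : ℝ) : Prop := ∃ k : ℤ, 0 ≤ z + k * b₀ ∧ z + k * b₀ ≤ y₀

theorem period_iff_diophantine (n : ℕ) [NeZero n]
    (y₀ : ℝ) (hy₀ : 0 < y₀) (b₀ : ℝ) (hb₀ : 0 < b₀)
    (a : Fin n → (Fin n → ℝ)) (bv : Fin n → ℝ) (ha : LinearIndependent ℝ a)
    (L : Set ((Fin n → ℝ) × ℝ))
    (hL : L = (Submodule.span ℤ (insert ((0 : Fin n → ℝ), b₀)
          (Set.range fun i : Fin n => ((a i, bv i) : _ × ℝ))) : Set _))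
    (hmin : ∀ b' : ℝ, b' ≠ 0 → ((0 : Fin n → ℝ), b') ∈ L → b₀ ≤ |b'|)
    (p : Fin n → ℝ) (m' : ℤ) (hm' : 0 < m') (hpa : (m' : ℝ) • a 0 = p)
    (hp0 : ((p, (0 : ℝ)) : _ × ℝ) ∉ L) :
    (∀ x ∈ projBand n L y₀, x + p ∈ projBand n L y₀) ↔
      (∀ m : Fin n → ℤ,
        inBandMod (∑ i, (m i : ℝ) * bv i) y₀ b₀ →
        inBandMod ((m' : ℝ) * bv 0 + ∑ i, (m i : ℝ) * bv i) y₀ b₀) := by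
  subst hL
  -- membership characterization
  have hmem : ∀ (x : Fin n → ℝ) (y : ℝ),
      (((x, y) : _ × ℝ) ∈ (Submodule.span ℤ (insert ((0 : Fin n → ℝ), b₀)
          (Set.range fun i : Fin n => ((a i, bv i) : _ × ℝ))) : Set _)) ↔
      ∃ (k : ℤ) (c : Fin n → ℤ), x = ∑ i, (c i : ℝ) • a i ∧
        y = (k : ℝ) * b₀ + ∑ i, (c i : ℝ) * bv i := by
    intro x y
    rw [SetLike.mem_coe, Submodule.mem_span_insert]
    constructor
    · rintro ⟨k, z, hz, hxy⟩
      rw [Submodule.mem_span_range_iff_exists_fun] at hz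
      obtain ⟨c, hc⟩ := hz
      refine ⟨k, c, ?_, ?_⟩
      · have h1 := congrArg Prod.fst hxy
        simp only [Prod.fst_add, Prod.fst_sum] at h1
        rw [← hc] at h1
        simp only [Prod.fst_add, Prod.fst_sum, Prod.smul_fst, smul_zero] at h1
        rw [h1]
        simp [Int.cast_smul_eq_zsmul]
      · have h2 := congrArg Prod.snd hxy
        rw [← hc] at h2
        simp only [Prod.snd_add, Prod.snd_sum, Prod.smul_snd, smul_eq_mul] at h2
        rw [h2]
        push_cast
        ring_nf
        simp [mul_comm]
    · rintro ⟨k, c, hx, hy⟩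
      refine ⟨k, ∑ i, c i • ((a i, bv i) : _ × ℝ), ?_, ?_⟩
      · rw [Submodule.mem_span_range_iff_exists_fun]
        exact ⟨c, rfl⟩
      · apply Prod.ext
        · simp only [Prod.fst_add, Prod.fst_sum, Prod.smul_fst, smul_zero]
          rw [hx]
          simp [Int.cast_smul_eq_zsmul]
        · simp only [Prod.snd_add, Prod.snd_sum, Prod.smul_snd, smul_eq_mul]
          rw [hy]
          push_cast
          ring_nf
          simp [mul_comm]
  -- uniqueness of coefficients from linear independence
  have huniq : ∀ (c d : Fin n → ℤ),
      (∑ i, (c i : ℝ) • a i) = (∑ i, (d i : ℝ) • a i) → c = d := by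
    intro c d h
    have := Fintype.linearIndependent_iff.mp ha (fun i => (c i : ℝ) - (d i : ℝ)) ?_
    · funext i
      have hi := this i
      have : (c i : ℝ) = (d i : ℝ) := by linarith
      exact_mod_cast this
    · simp only [sub_smul, Finset.sum_sub_distrib, h, sub_self]
  -- shifted coefficient computation
  have hshift : ∀ c : Fin n → ℤ,
      (∑ i, ((c i + if i = 0 then m' else 0 : ℤ) : ℝ) • a i)
        = (∑ i, (c i : ℝ) • a i) + p := by
    intro c
    rw [← hpa]
    push_cast
    simp only [add_smul, Finset.sum_add_distrib]
    congr 1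
    rw [show (∑ i, ((if i = 0 then (m' : ℝ) else 0) • a i))
        = ∑ i, (if i = 0 then (m' : ℝ) • a i else 0) by
      apply Finset.sum_congr rfl; intro i _; split <;> simp]
    simp
  have hshiftb : ∀ c : Fin n → ℤ,
      (∑ i, ((c i + if i = 0 then m' else 0 : ℤ) : ℝ) * bv i)
        = (m' : ℝ) * bv 0 + ∑ i, (c i : ℝ) * bv i := by
    intro c
    push_cast
    simp only [add_mul, Finset.sum_add_distrib]
    rw [show (∑ i, ((if i = 0 then (m' : ℝ) else 0) * bv i))
        = ∑ i, (if i = 0 then (m' : ℝ) * bv i else 0) by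
      apply Finset.sum_congr rfl; intro i _; split <;> simp]
    simp [add_comm]
  constructor
  · intro hper m hm
    obtain ⟨k, hk0, hk1⟩ := hm
    have hx : (∑ i, (m i : ℝ) • a i) ∈ projBand n
        (Submodule.span ℤ (insert ((0 : Fin n → ℝ), b₀)
          (Set.range fun i : Fin n => ((a i, bv i) : _ × ℝ))) : Set _) y₀ := by
      refine ⟨(∑ i, (m i : ℝ) * bv i) + k * b₀, hk0, hk1, ?_⟩
      rw [hmem]
      exact ⟨k, m, rfl, by ring⟩
    obtain ⟨y', hy'0, hy'1, hy'L⟩ := hper _ hx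
    rw [hmem] at hy'L
    obtain ⟨k', d, hd, hy'⟩ := hy'L
    have hdm : d = fun i => m i + if i = 0 then m' else 0 := by
      apply huniq
      rw [← hd, hshift]
    have hsum : (∑ i, (d i : ℝ) * bv i) = (m' : ℝ) * bv 0 + ∑ i, (m i : ℝ) * bv i := by
      simp only [hdm]; exact hshiftb m
    refine ⟨k', by rw [hy', hsum] at hy'0; linarith, by rw [hy', hsum] at hy'1; linarith⟩
  · intro hdio x hx
    obtain ⟨y, hy0, hy1, hyL⟩ := hx
    rw [hmem] at hyL
    obtain ⟨k, c, hxc, hyc⟩ := hyL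
    have hband : inBandMod (∑ i, (c i : ℝ) * bv i) y₀ b₀ :=
      ⟨k, by rw [hyc] at hy0; linarith, by rw [hyc] at hy1; linarith⟩
    obtain ⟨k', hk'0, hk'1⟩ := hdio c hband
    refine ⟨(m' : ℝ) * bv 0 + (∑ i, (c i : ℝ) * bv i) + k' * b₀, hk'0, hk'1, ?_⟩
    rw [hmem]
    refine ⟨k', fun i => c i + if i = 0 then m' else 0, ?_, ?_⟩
    · rw [hshift, hxc]
    · rw [hshiftb]; ring
end

section
/- Let L be a lattice in R^{n+1} invariant under σ(x,y)=(x,−y), with (0,b) ∈ L minimal in its vertical direction, b > 0. Suppose (p,q) ∈ L with y_0/2 < q ≤ y_0 and b = 2q. Then for every (x,y) ∈ L with 0 < y ≤ y_0, one has y = q, and consequently (x+p,0) ∈ L, so p is a period of P(L ∩ B_{y_0}). -/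
theorem heights_forced_and_period (n : ℕ)
    (L : Set ((Fin n → ℝ) × ℝ)) (hL : IsLatticeIn (n + 1) L)
    (hσ : sigmaRefl n '' L = L)
    (b : ℝ) (hb : 0 < b) (hbL : ((0 : Fin n → ℝ), b) ∈ L)
    (hmin : ∀ b' : ℝ, b' ≠ 0 → ((0 : Fin n → ℝ), b') ∈ L → b ≤ |b'|)
    (y₀ : ℝ) (hy₀ : 0 < y₀)
    (p : Fin n → ℝ) (q : ℝ) (hpq : ((p, q) : _ × ℝ) ∈ L)
    (hq₁ : y₀ / 2 < q) (hq₂ : q ≤ y₀) (hbq : b = 2 * q) :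
    (∀ x : Fin n → ℝ, ∀ y : ℝ, ((x, y) : _ × ℝ) ∈ L → 0 < y → y ≤ y₀ → y = q) ∧
    (∀ x : Fin n → ℝ, ∀ y : ℝ, ((x, y) : _ × ℝ) ∈ L → 0 < y → y ≤ y₀ →
      ((x + p, (0 : ℝ)) : _ × ℝ) ∈ L) ∧
    (∀ x ∈ projBand n L y₀, x + p ∈ projBand n L y₀) := by
  obtain ⟨v, -, hLeq⟩ := hL
  -- closure under negation of y
  have hneg : ∀ x : Fin n → ℝ, ∀ y : ℝ, ((x, y) : _ × ℝ) ∈ L → ((x, -y) : _ × ℝ) ∈ L := by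
    intro x y hxy
    have : sigmaRefl n (x, y) ∈ sigmaRefl n '' L := Set.mem_image_of_mem _ hxy
    rw [hσ] at this
    exact this
  have hadd : ∀ a c : Fin n → ℝ, ∀ y z : ℝ,
      ((a, y) : _ × ℝ) ∈ L → ((c, z) : _ × ℝ) ∈ L → ((a + c, y + z) : _ × ℝ) ∈ L := by
    intro a c y z ha hc
    rw [hLeq] at ha hc ⊢
    exact Submodule.add_mem _ ha hc
  have hsub : ∀ a c : Fin n → ℝ, ∀ y z : ℝ,
      ((a, y) : _ × ℝ) ∈ L → ((c, z) : _ × ℝ) ∈ L → ((a - c, y - z) : _ × ℝ) ∈ L := by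
    intro a c y z ha hc
    rw [hLeq] at ha hc ⊢
    exact Submodule.sub_mem _ ha hc
  have hq0 : 0 < q := by linarith
  have key : ∀ x : Fin n → ℝ, ∀ y : ℝ, ((x, y) : _ × ℝ) ∈ L → 0 < y → y ≤ y₀ → y = q := by
    intro x y hxy hy0 hyy
    by_contra hne
    have h1 : ((x + p, y + -q) : _ × ℝ) ∈ L := hadd _ _ _ _ hxy (hneg _ _ hpq)
    have h2 : ((x + p, -(y + -q)) : _ × ℝ) ∈ L := hneg _ _ h1
    have h3 : ((x + p - (x + p), y + -q - -(y + -q)) : _ × ℝ) ∈ L := hsub _ _ _ _ h1 h2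
    have h4 : ((0 : Fin n → ℝ), 2 * (y - q)) ∈ L := by
      have e1 : x + p - (x + p) = (0 : Fin n → ℝ) := by abel
      have e2 : y + -q - -(y + -q) = 2 * (y - q) := by ring
      rwa [e1, e2] at h3
    have hne' : 2 * (y - q) ≠ 0 := by
      intro h; apply hne; linarith [mul_eq_zero.mp h]
      -- fallback
    have := hmin _ hne' h4
    rw [hbq] at this
    rcases abs_cases (2 * (y - q)) with ⟨he, -⟩ | ⟨he, -⟩ <;> rw [he] at this <;>
      nlinarith
  refine ⟨key, ?_, ?_⟩
  · intro x y hxy hy0 hyy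
    have hyq := key x y hxy hy0 hyy
    subst hyq
    have := hadd _ _ _ _ hxy (hneg _ _ hpq)
    simpa using this
  · rintro x ⟨y, hy0, hyy, hxy⟩
    rcases eq_or_lt_of_le hy0 with h0 | h0
    · exact ⟨q, le_of_lt hq0, hq₂, by simpa [← h0] using hadd _ _ _ _ hxy hpq⟩
    · have hyq := key x y hxy h0 hyy
      subst hyq
      exact ⟨0, le_refl _, le_of_lt hy₀, by simpa using hadd _ _ _ _ hxy (hneg _ _ hpq)⟩
end

section
/- Let Γ ⊆ E(n+1) be a crystallographic group with lattice L containing (0,y_0), and suppose ((v_1,y_1),σ) ∈ Γ with v_1 ∉ P(L), where σ(x,y)=(x,−y). Write L = {(0,a), l_1, …, l_n}_Z with P(l_i) linearly independent. Then there exists v_2 = Σ s_i P(l_i) with each s_i ∈ {0, 1/2}, not all zero, such that P(L) ∪ (v_2 + P(L)) is a lattice in R^n containing P(L) as an index-2 sublattice. -/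
lemma span_insert_union_aux {V : Type*} [AddCommGroup V] (v : V) (S : Set V)
    (h2 : v + v ∈ Submodule.span ℤ S) :
    (Submodule.span ℤ S : Set V) ∪ ((fun x => v + x) '' (Submodule.span ℤ S)) =
      (Submodule.span ℤ (insert v S) : Set V) := by
  ext x
  constructor
  · rintro (hx | ⟨y, hy, rfl⟩)
    · exact Submodule.span_mono (Set.subset_insert _ _) hx
    · exact Submodule.add_mem _ (Submodule.subset_span (Set.mem_insert _ _))
        (Submodule.span_mono (Set.subset_insert _ _) hy)
  · intro hx
    rw [SetLike.mem_coe, Submodule.mem_span_insert] at hx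
    obtain ⟨k, z, hz, rfl⟩ := hx
    rcases Int.even_or_odd k with ⟨q, hq⟩ | ⟨q, hq⟩
    · left
      have hk : k • v = q • (v + v) := by rw [hq, smul_add, add_smul]
      rw [SetLike.mem_coe, hk]
      exact Submodule.add_mem _ (Submodule.smul_mem _ q h2) hz
    · right
      refine ⟨q • (v + v) + z, Submodule.add_mem _ (Submodule.smul_mem _ q h2) hz, ?_⟩
      simp only [hq, add_smul, one_smul, mul_smul, two_smul, smul_add]
      abel

/-- The linear map `σ(x,y) = (x,-y)` on `ℝⁿ × ℝ`. -/
def sigmaMap (n : ℕ) : ((Fin n → ℝ) × ℝ) →ₗ[ℝ] ((Fin n → ℝ) × ℝ) :=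
  (LinearMap.fst ℝ (Fin n → ℝ) ℝ).prod (-(LinearMap.snd ℝ (Fin n → ℝ) ℝ))

theorem projected_lattice_index_two (n : ℕ)
    (Γ : Set (((Fin n → ℝ) × ℝ) × (((Fin n → ℝ) × ℝ) →ₗ[ℝ] ((Fin n → ℝ) × ℝ))))
    (hmul : ∀ v₁ δ₁ v₂ δ₂, (v₁, δ₁) ∈ Γ → (v₂, δ₂) ∈ Γ → (v₁ + δ₁ v₂, δ₁ ∘ₗ δ₂) ∈ Γ)
    (L : Set ((Fin n → ℝ) × ℝ))
    (hLdef : L = {v | (v, (LinearMap.id : ((Fin n → ℝ) × ℝ) →ₗ[ℝ] _)) ∈ Γ})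
    (a : ℝ) (ha : a ≠ 0) (l : Fin n → (Fin n → ℝ) × ℝ)
    (hind : LinearIndependent ℝ fun i => (l i).1)
    (hL : L = (Submodule.span ℤ (insert ((0 : Fin n → ℝ), a) (Set.range l)) : Set _))
    (y₀ : ℝ) (hy₀ : ((0 : Fin n → ℝ), y₀) ∈ L)
    (v₁ : Fin n → ℝ) (y₁ : ℝ) (hσ : (((v₁, y₁) : _ × ℝ), sigmaMap n) ∈ Γ)
    (hv₁ : v₁ ∉ Prod.fst '' L) :
    ∃ s : Fin n → ℝ, (∀ i, s i = 0 ∨ s i = 1 / 2) ∧ s ≠ 0 ∧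
      (Prod.fst '' L) ∪ ((fun x => (∑ i, s i • (l i).1) + x) '' (Prod.fst '' L)) =
        (Submodule.span ℤ (insert (∑ i, s i • (l i).1)
          (Set.range fun i => (l i).1)) : Set (Fin n → ℝ)) ∧
      (∑ i, s i • (l i).1) ∉ Prod.fst '' L ∧
      (2 : ℝ) • (∑ i, s i • (l i).1) ∈ Prod.fst '' L := by
  -- The projected lattice
  set M : Submodule ℤ (Fin n → ℝ) := Submodule.span ℤ (Set.range fun i => (l i).1) with hM
  -- P(L) = M
  have hPL : Prod.fst '' L = (M : Set (Fin n → ℝ)) := by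
    rw [hL]
    have : (Prod.fst : (Fin n → ℝ) × ℝ → (Fin n → ℝ)) =
        (LinearMap.fst ℤ (Fin n → ℝ) ℝ : (Fin n → ℝ) × ℝ →ₗ[ℤ] (Fin n → ℝ)) := rfl
    rw [this, ← Submodule.map_coe, Submodule.map_span]
    congr 1
    rw [Set.image_insert_eq]
    have h0 : (LinearMap.fst ℤ (Fin n → ℝ) ℝ) ((0 : Fin n → ℝ), a) = 0 := rfl
    rw [h0, Submodule.span_insert_zero]
    congr 1
    rw [← Set.range_comp]
    rfl
  -- the square relation: (2v₁, 0) ∈ L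
  have hsq := hmul _ _ _ _ hσ hσ
  have hσσ : sigmaMap n ∘ₗ sigmaMap n = LinearMap.id := by
    ext x <;> simp [sigmaMap]
  have hvec : ((v₁, y₁) : (Fin n → ℝ) × ℝ) + (sigmaMap n) (v₁, y₁) = (v₁ + v₁, 0) := by
    simp [sigmaMap, Prod.ext_iff]
  rw [hσσ, hvec] at hsq
  have hmemL : ((v₁ + v₁, (0 : ℝ)) : (Fin n → ℝ) × ℝ) ∈ L := by rw [hLdef]; exact hsq
  rw [hL, SetLike.mem_coe, Submodule.mem_span_insert] at hmemL
  obtain ⟨k, z, hz, heq⟩ := hmemL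
  rw [Submodule.mem_span_range_iff_exists_fun] at hz
  obtain ⟨c, hc⟩ := hz
  -- first components
  have hfst : v₁ + v₁ = ∑ i, ((c i : ℝ)) • (l i).1 := by
    have := congrArg Prod.fst heq
    simp only [Prod.fst_add, Prod.smul_fst, smul_zero, ← hc, Prod.fst_sum] at this
    rw [this, zero_add]
    exact Finset.sum_congr rfl fun i _ => (Int.cast_smul_eq_zsmul ℝ (c i) (l i).1).symm
  -- the coefficients
  set s : Fin n → ℝ := fun i => ((c i % 2 : ℤ) : ℝ) / 2 with hs
  set v₂ : Fin n → ℝ := ∑ i, s i • (l i).1 with hv₂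
  have half : ∀ A B : Fin n → ℝ, A + A = B + B → A = B := by
    intro A B h
    have h2 : (2 : ℝ) • A = (2 : ℝ) • B := by rw [two_smul, two_smul]; exact h
    exact smul_right_injective (Fin n → ℝ) two_ne_zero h2
  have h1 : v₁ = ∑ i, ((c i : ℝ) / 2) • (l i).1 := by
    refine half _ _ ?_
    rw [hfst, ← Finset.sum_add_distrib]
    refine Finset.sum_congr rfl fun i _ => ?_
    rw [← add_smul]
    norm_num
  have hdoubleeq : v₂ + v₂ = ∑ i, (c i % 2) • (l i).1 := by
    rw [hv₂, ← Finset.sum_add_distrib]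
    refine Finset.sum_congr rfl fun i _ => ?_
    rw [← add_smul, ← Int.cast_smul_eq_zsmul ℝ]
    congr 1
    simp [hs]
  have hdouble : v₂ + v₂ ∈ M := by
    rw [hM, hdoubleeq, Submodule.mem_span_range_iff_exists_fun]
    exact ⟨fun i => c i % 2, rfl⟩
  have hdiffeq : v₁ - v₂ = ∑ i, ((c i / 2 : ℤ) : ℝ) • (l i).1 := by
    rw [h1, hv₂, ← Finset.sum_sub_distrib]
    refine Finset.sum_congr rfl fun i _ => ?_
    rw [← sub_smul]
    congr 1
    have h2 : (2 : ℝ) * ((c i / 2 : ℤ) : ℝ) = (c i : ℝ) - ((c i % 2 : ℤ) : ℝ) := by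
      rw [show (2 : ℝ) * ((c i / 2 : ℤ) : ℝ) = ((2 * (c i / 2) : ℤ) : ℝ) by push_cast; ring,
        show (2 * (c i / 2) : ℤ) = c i - c i % 2 from by omega]
      push_cast
      ring
    simp only [hs]
    linarith
  have hdiffmem : v₁ - v₂ ∈ M := by
    rw [hM, Submodule.mem_span_range_iff_exists_fun]
    refine ⟨fun i => c i / 2, ?_⟩
    rw [hdiffeq]
    exact Finset.sum_congr rfl fun i _ => (Int.cast_smul_eq_zsmul ℝ _ _).symm
  rw [hPL] at hv₁
  have hv₂not : v₂ ∉ (M : Set (Fin n → ℝ)) := by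
    intro h
    apply hv₁
    have := M.add_mem hdiffmem h
    simpa using this
  refine ⟨s, fun i => ?_, ?_, ?_, ?_, ?_⟩
  · rcases Int.emod_two_eq (c i) with h | h <;> simp [hs, h]
  · intro h
    apply hv₂not
    have : v₂ = 0 := by
      rw [hv₂]
      refine Finset.sum_eq_zero fun i _ => ?_
      rw [congrFun h i]
      simp
    rw [this]
    exact M.zero_mem
  · rw [hPL, ← hv₂]
    exact span_insert_union_aux v₂ _ hdouble
  · rw [hPL, ← hv₂]
    exact hv₂not
  · rw [hPL, ← hv₂, SetLike.mem_coe, two_smul]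
    exact hdouble
end

section
/- Let L_T = {(1,0,0), (1/2, √3/2, 0), (1,1,1)}_Z ⊂ R³. Then for every y_0 > 0 and every p in the hexagonal lattice H = {(1,0),(1/2,√3/2)}_Z ⊂ R², p is a period of P(L_T ∩ B_{y_0}), where P(x,y,z)=(x,y) and B_{y_0} = {(x,y,z) : 0 ≤ z ≤ y_0}. Moreover L_T ∩ {(0,0,z) : z ∈ R} = {(0,0,0)}. -/
/-- The triclinic lattice `L_T = {(1,0,0), (1/2,√3/2,0), (1,1,1)}_ℤ ⊂ ℝ³`,
modelled in `ℝ² × ℝ`. -/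
def triclinicLT : Set ((Fin 2 → ℝ) × ℝ) :=
  (Submodule.span ℤ ({((![1, 0] : Fin 2 → ℝ), (0 : ℝ)),
      ((![1 / 2, Real.sqrt 3 / 2] : Fin 2 → ℝ), (0 : ℝ)),
      ((![1, 1] : Fin 2 → ℝ), (1 : ℝ))} : Set ((Fin 2 → ℝ) × ℝ)) : Set ((Fin 2 → ℝ) × ℝ))

/-- The standard planar hexagonal lattice. -/
def hexLattice : Set (Fin 2 → ℝ) :=
  (Submodule.span ℤ ({(![1, 0] : Fin 2 → ℝ),
      (![1 / 2, Real.sqrt 3 / 2] : Fin 2 → ℝ)} : Set (Fin 2 → ℝ)) : Set (Fin 2 → ℝ))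

/-- Explicit description of membership in the triclinic lattice. -/
lemma mem_LT_iff (v : (Fin 2 → ℝ) × ℝ) :
    v ∈ triclinicLT ↔ ∃ a b c : ℤ,
      v = a • (((![1, 0] : Fin 2 → ℝ), (0 : ℝ)) : (Fin 2 → ℝ) × ℝ)
        + b • (((![1 / 2, Real.sqrt 3 / 2] : Fin 2 → ℝ), (0 : ℝ)) : (Fin 2 → ℝ) × ℝ)
        + c • (((![1, 1] : Fin 2 → ℝ), (1 : ℝ)) : (Fin 2 → ℝ) × ℝ) := by
  show v ∈ Submodule.span ℤ _ ↔ _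
  rw [show ({((![1, 0] : Fin 2 → ℝ), (0 : ℝ)),
      ((![1 / 2, Real.sqrt 3 / 2] : Fin 2 → ℝ), (0 : ℝ)),
      ((![1, 1] : Fin 2 → ℝ), (1 : ℝ))} : Set ((Fin 2 → ℝ) × ℝ))
    = insert ((![1, 0] : Fin 2 → ℝ), (0 : ℝ))
        {((![1 / 2, Real.sqrt 3 / 2] : Fin 2 → ℝ), (0 : ℝ)),
         ((![1, 1] : Fin 2 → ℝ), (1 : ℝ))} from rfl,
     Submodule.mem_span_insert]
  constructor
  · rintro ⟨a, w, hw, rfl⟩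
    obtain ⟨b, c, rfl⟩ := Submodule.mem_span_pair.mp hw
    exact ⟨a, b, c, by abel⟩
  · rintro ⟨a, b, c, rfl⟩
    exact ⟨a, _, Submodule.mem_span_pair.mpr ⟨b, c, rfl⟩, by abel⟩

theorem triclinic_projects_to_hexagonal :
    (∀ y₀ : ℝ, 0 < y₀ → ∀ p ∈ hexLattice,
      ∀ x : Fin 2 → ℝ, (∃ z : ℝ, 0 ≤ z ∧ z ≤ y₀ ∧ ((x, z) : _ × ℝ) ∈ triclinicLT) →
        (∃ z : ℝ, 0 ≤ z ∧ z ≤ y₀ ∧ ((x + p, z) : _ × ℝ) ∈ triclinicLT)) ∧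
    {v : (Fin 2 → ℝ) × ℝ | v ∈ triclinicLT ∧ v.1 = 0} = {((0 : Fin 2 → ℝ), (0 : ℝ))} := by
  constructor
  · rintro y₀ _ p hp x ⟨z, hz0, hzy, hx⟩
    refine ⟨z, hz0, hzy, ?_⟩
    obtain ⟨a, b, c, hv⟩ := (mem_LT_iff _).mp hx
    obtain ⟨s, t, hpeq⟩ := Submodule.mem_span_pair.mp hp
    refine (mem_LT_iff _).mpr ⟨a + s, b + t, c, ?_⟩
    rw [Prod.ext_iff] at hv ⊢
    obtain ⟨h1, h2⟩ := hv
    constructor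
    · simp only [Prod.fst_add, Prod.smul_fst] at h1 ⊢
      rw [add_smul, add_smul, h1, ← hpeq]; abel
    · simp only [Prod.snd_add, Prod.smul_snd] at h2 ⊢
      simpa using h2
  · ext v
    simp only [Set.mem_setOf_eq, Set.mem_singleton_iff]
    constructor
    · rintro ⟨hv, hv1⟩
      obtain ⟨a, b, c, rfl⟩ := (mem_LT_iff _).mp hv
      simp only [Prod.fst_add, Prod.smul_fst] at hv1
      have h1 : (a : ℝ) + b / 2 + c = 0 := by
        have := congrFun hv1 0
        simpa [Matrix.cons_val_zero, div_eq_mul_inv] using this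
      have h2 : (b : ℝ) * (Real.sqrt 3 / 2) + c = 0 := by
        have := congrFun hv1 1
        simpa [Matrix.cons_val_one, Matrix.head_cons] using this
      have hb : b = 0 := by
        by_contra hb
        have hirr : Irrational (Real.sqrt 3) := by
          simpa using (Nat.prime_three.irrational_sqrt)
        apply hirr
        refine ⟨(-2 * c : ℤ) / (b : ℚ), ?_⟩
        have hbR : (b : ℝ) ≠ 0 := Int.cast_ne_zero.mpr hb
        push_cast
        field_simp
        linarith [h2]
      have hc : c = 0 := by
        rw [hb] at h2; push_cast at h2; simpa using h2
      have ha : a = 0 := by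
        rw [hb, hc] at h1; norm_num at h1; exact_mod_cast h1
      subst ha; subst hb; subst hc
      simp
      rfl
    · rintro rfl
      exact ⟨Submodule.zero_mem _, rfl⟩
end
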